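/- arXiv:2201.01124 — 3 statements merged into one kernel-verified Lean document; each statement's English description precedes it below -/
import Mathlib

section
/- For every real x, cos x = Π_{n=1}^∞ (1 - x²/((2n-1)π/2)²), i.e. the cosine function has the infinite product representation over odd integers. -/
open Real Filter Finset Topology

private lemma my_prod_range_two_mul (g : ℕ → ℝ) (n : ℕ) :
    ∏ j ∈ Finset.range (2 * n), g j =
      (∏ i ∈ Finset.range n, g (2 * i)) * ∏ i ∈ Finset.range n, g (2 * i + 1) := by
  induction n with
  | zero => simp
  | succ n ih =>
    rw [show 2 * (n + 1) = (2 * n + 1) + 1 by ring, Finset.prod_range_succ,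
      Finset.prod_range_succ, Finset.prod_range_succ, Finset.prod_range_succ, ih]
    ring

/-- Identification of the limit of partial products with `cos z`, when `sin z ≠ 0`. -/
private lemma limit_eq_cos (z : ℝ) (hz : Real.sin z ≠ 0) (P : ℝ)
    (hP : Filter.Tendsto
      (fun n : ℕ => ∏ i ∈ Finset.range n, (1 - z ^ 2 / ((2 * (i : ℝ) + 1) * π / 2) ^ 2))
      atTop (𝓝 P)) : P = Real.cos z := by
  have hπ : (π : ℝ) ≠ 0 := Real.pi_ne_zero
  have hT := Real.tendsto_euler_sin_prod (z / π)
  have hS := Real.tendsto_euler_sin_prod (2 * z / π)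
  have e1 : π * (z / π) = z := by field_simp
  have e2 : π * (2 * z / π) = 2 * z := by field_simp
  rw [e1] at hT
  rw [e2] at hS
  -- pass to the subsequence 2n in hS
  have h2n : Filter.Tendsto (fun n : ℕ => 2 * n) atTop atTop :=
    (strictMono_mul_left_of_pos (by norm_num : (0:ℕ) < 2)).tendsto_atTop
  have hS2 := hS.comp h2n
  -- key algebraic identity for partial products
  have hkey : ∀ n : ℕ,
      (2 * z) * ∏ j ∈ Finset.range (2 * n), (1 - (2 * z / π) ^ 2 / ((j : ℝ) + 1) ^ 2) =
      (∏ i ∈ Finset.range n, (1 - z ^ 2 / ((2 * (i : ℝ) + 1) * π / 2) ^ 2)) *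
        (2 * (z * ∏ j ∈ Finset.range n, (1 - (z / π) ^ 2 / ((j : ℝ) + 1) ^ 2))) := by
    intro n
    rw [my_prod_range_two_mul]
    have hA : ∀ i ∈ Finset.range n,
        (1 - (2 * z / π) ^ 2 / (((2 * i : ℕ) : ℝ) + 1) ^ 2) =
        (1 - z ^ 2 / ((2 * (i : ℝ) + 1) * π / 2) ^ 2) := by
      intro i _
      have h1 : (2 * (i : ℝ) + 1) ≠ 0 := by positivity
      push_cast
      field_simp
    have hB : ∀ i ∈ Finset.range n,
        (1 - (2 * z / π) ^ 2 / (((2 * i + 1 : ℕ) : ℝ) + 1) ^ 2) =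
        (1 - (z / π) ^ 2 / ((i : ℝ) + 1) ^ 2) := by
      intro i _
      have h1 : ((i : ℝ) + 1) ≠ 0 := by positivity
      push_cast
      field_simp
      ring
    rw [Finset.prod_congr rfl hA, Finset.prod_congr rfl hB]
    ring
  have hlhs : Filter.Tendsto
      (fun n : ℕ =>
        (∏ i ∈ Finset.range n, (1 - z ^ 2 / ((2 * (i : ℝ) + 1) * π / 2) ^ 2)) *
        (2 * (z * ∏ j ∈ Finset.range n, (1 - (z / π) ^ 2 / ((j : ℝ) + 1) ^ 2))))
      atTop (𝓝 (P * (2 * Real.sin z))) := hP.mul (hT.const_mul 2)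
  have hlhs' : Filter.Tendsto
      (fun n : ℕ =>
        (2 * z) * ∏ j ∈ Finset.range (2 * n), (1 - (2 * z / π) ^ 2 / ((j : ℝ) + 1) ^ 2))
      atTop (𝓝 (P * (2 * Real.sin z))) := by
    refine hlhs.congr fun n => (hkey n).symm
  have huniq : P * (2 * Real.sin z) = Real.sin (2 * z) :=
    tendsto_nhds_unique hlhs' hS2
  rw [Real.sin_two_mul] at huniq
  have h2s : (2 : ℝ) * Real.sin z ≠ 0 := by
    exact mul_ne_zero two_ne_zero hz
  have hfin : P * (2 * Real.sin z) = Real.cos z * (2 * Real.sin z) := by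
    linear_combination huniq
  exact mul_right_cancel₀ h2s hfin

set_option maxHeartbeats 1000000 in
private lemma hasProd_aux (R : ℝ) (hR : 0 < R) :
    ∃ G : ℝ → ℝ, Continuous G ∧ ∀ z : ℝ, |z| ≤ R →
      HasProd (fun n : ℕ => 1 - z ^ 2 / ((2 * (n : ℝ) + 1) * π / 2) ^ 2) (G z) := by
  set c : ℕ → ℝ := fun n => (2 * (n : ℝ) + 1) * π / 2 with hc_def
  have hπ : (3 : ℝ) < π := Real.pi_gt_three
  have hc_ge : ∀ n : ℕ, (n : ℝ) + 1 ≤ c n := by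
    intro n
    have : (2 * (n : ℝ) + 1) * 1 ≤ (2 * (n : ℝ) + 1) * (π / 2) := by
      apply mul_le_mul_of_nonneg_left (by linarith) (by positivity)
    simp only [hc_def]
    calc (n : ℝ) + 1 ≤ 2 * (n : ℝ) + 1 := by linarith [Nat.cast_nonneg (α := ℝ) n]
    _ ≤ (2 * (n : ℝ) + 1) * (π / 2) := by linarith
    _ = (2 * (n : ℝ) + 1) * π / 2 := by ring
  have hc_pos : ∀ n : ℕ, 0 < c n := fun n => lt_of_lt_of_le (by positivity) (hc_ge n)
  -- choose N large enough
  obtain ⟨N, hN⟩ : ∃ N : ℕ, 2 * R ^ 2 ≤ (N : ℝ) := ⟨⌈2 * R ^ 2⌉₊, Nat.le_ceil _⟩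
  have hcsq : ∀ m : ℕ, 2 * R ^ 2 ≤ (c (N + m)) ^ 2 := by
    intro m
    have h1 : (N : ℝ) + 1 ≤ c (N + m) := by
      calc (N : ℝ) + 1 ≤ ((N + m : ℕ) : ℝ) + 1 := by push_cast; linarith [Nat.cast_nonneg (α := ℝ) m]
      _ ≤ c (N + m) := hc_ge _
    calc 2 * R ^ 2 ≤ (N : ℝ) + 1 := by linarith
    _ ≤ ((N : ℝ) + 1) ^ 2 := by nlinarith [Nat.cast_nonneg (α := ℝ) N]
    _ ≤ (c (N + m)) ^ 2 := by nlinarith [Nat.cast_nonneg (α := ℝ) N, hc_pos (N + m)]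
  -- clamped square
  set w : ℝ → ℝ := fun z => min (z ^ 2) (R ^ 2) with hw_def
  have hw_cont : Continuous w := (continuous_pow 2).min continuous_const
  have hw_nonneg : ∀ z, 0 ≤ w z := fun z => le_min (by positivity) (by positivity)
  have hw_le : ∀ z, w z ≤ R ^ 2 := fun z => min_le_right _ _
  have hw_eq : ∀ z : ℝ, |z| ≤ R → w z = z ^ 2 := by
    intro z hz
    have : z ^ 2 ≤ R ^ 2 := by
      have := abs_nonneg z
      nlinarith [sq_abs z]
    exact min_eq_left this
  -- the tail log terms
  set L : ℕ → ℝ → ℝ := fun m z => Real.log (1 - w z / (c (N + m)) ^ 2) with hL_def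
  have harg : ∀ m z, 1 / 2 ≤ 1 - w z / (c (N + m)) ^ 2 := by
    intro m z
    have h1 : w z / (c (N + m)) ^ 2 ≤ 1 / 2 := by
      rw [div_le_iff₀ (by positivity)]
      calc w z ≤ R ^ 2 := hw_le z
      _ ≤ 1 / 2 * (c (N + m)) ^ 2 := by linarith [hcsq m]
    linarith
  have harg_pos : ∀ m z, 0 < 1 - w z / (c (N + m)) ^ 2 := fun m z => lt_of_lt_of_le (by norm_num) (harg m z)
  have hL_cont : ∀ m, Continuous (fun z => L m z) := by
    intro m
    apply Continuous.log
    · exact continuous_const.sub (hw_cont.div_const _)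
    · intro z
      exact ne_of_gt (harg_pos m z)
  -- uniform bound
  set u : ℕ → ℝ := fun m => 2 * R ^ 2 / ((m : ℝ) + 1) ^ 2 with hu_def
  have hu_sum : Summable u := by
    have h1 : Summable (fun m : ℕ => 1 / ((m : ℝ) + 1) ^ 2) := by
      have := (summable_nat_add_iff (f := fun n : ℕ => 1 / (n : ℝ) ^ 2) 1).mpr
        (Real.summable_one_div_nat_pow.mpr one_lt_two)
      refine this.congr fun n => by push_cast; ring
    have := h1.mul_left (2 * R ^ 2)
    refine this.congr fun n => by simp [hu_def]; ring
  have hL_bound : ∀ m z, |L m z| ≤ u m := by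
    intro m z
    set t : ℝ := w z / (c (N + m)) ^ 2 with ht_def
    have ht0 : 0 ≤ t := by positivity
    have ht2 : t ≤ 1 / 2 := by linarith [harg m z]
    have hpos : 0 < 1 - t := by linarith
    have hlog_le : |Real.log (1 - t)| ≤ 2 * t := by
      rw [abs_of_nonpos (Real.log_nonpos (by linarith) (by linarith))]
      have h2 : Real.log (1 - t)⁻¹ ≤ (1 - t)⁻¹ - 1 := Real.log_le_sub_one_of_pos (by positivity)
      rw [Real.log_inv] at h2
      have h3 : (1 - t)⁻¹ ≤ 1 + 2 * t := by
        rw [inv_eq_one_div, div_le_iff₀ hpos]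
        nlinarith
      linarith
    have ht_le : t ≤ R ^ 2 / ((m : ℝ) + 1) ^ 2 := by
      have hm1 : ((m : ℝ) + 1) ^ 2 ≤ (c (N + m)) ^ 2 := by
        have : (m : ℝ) + 1 ≤ c (N + m) := by
          calc (m : ℝ) + 1 ≤ ((N + m : ℕ) : ℝ) + 1 := by push_cast; linarith [Nat.cast_nonneg (α := ℝ) N]
          _ ≤ c (N + m) := hc_ge _
        nlinarith [hc_pos (N + m), Nat.cast_nonneg (α := ℝ) m]
      rw [ht_def, div_le_div_iff₀ (by positivity) (by positivity)]
      nlinarith [hw_le z, hw_nonneg z]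
    calc |L m z| = |Real.log (1 - t)| := rfl
    _ ≤ 2 * t := hlog_le
    _ ≤ 2 * (R ^ 2 / ((m : ℝ) + 1) ^ 2) := by linarith
    _ = u m := by rw [hu_def]; ring
  -- the tail sum is continuous
  set T : ℝ → ℝ := fun z => ∑' m, L m z with hT_def
  have hT_cont : Continuous T := continuous_tsum hL_cont hu_sum hL_bound
  refine ⟨fun z => (∏ i ∈ Finset.range N, (1 - z ^ 2 / (c i) ^ 2)) * Real.exp (T z), ?_, ?_⟩
  · refine Continuous.mul ?_ (Real.continuous_exp.comp hT_cont)
    apply continuous_finset_prod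
    intro i _
    exact continuous_const.sub ((continuous_pow 2).div_const _)
  · intro z hz
    have hwz := hw_eq z hz
    -- summability of logs
    have hsummable : Summable (fun m => L m z) := by
      apply Summable.of_abs
      exact Summable.of_nonneg_of_le (fun m => abs_nonneg _) (fun m => hL_bound m z) hu_sum
    have hsum : HasSum (fun m => L m z) (T z) := hsummable.hasSum
    -- tail HasProd
    have htail : HasProd (fun m : ℕ => 1 - z ^ 2 / (c (N + m)) ^ 2) (Real.exp (T z)) := by
      have hprod_eq : ∀ s : Finset ℕ,
          ∏ m ∈ s, (1 - z ^ 2 / (c (N + m)) ^ 2) = Real.exp (∑ m ∈ s, L m z) := by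
        intro s
        rw [Real.exp_sum]
        refine Finset.prod_congr rfl fun m _ => ?_
        have hpos : (0 : ℝ) < 1 - z ^ 2 / (c (N + m)) ^ 2 := by
          have := harg_pos m z; rwa [hwz] at this
        have : L m z = Real.log (1 - z ^ 2 / (c (N + m)) ^ 2) := by
          simp only [hL_def, hwz]
        rw [this, Real.exp_log hpos]
      have htend : Filter.Tendsto (fun s : Finset ℕ => ∑ m ∈ s, L m z) atTop (𝓝 (T z)) := hsum
      have h2 := (Real.continuous_exp.tendsto (T z)).comp htend
      have h3 : Filter.Tendsto (fun s : Finset ℕ => ∏ m ∈ s, (1 - z ^ 2 / (c (N + m)) ^ 2))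
          atTop (𝓝 (Real.exp (T z))) := by
        refine h2.congr fun s => ?_
        exact (hprod_eq s).symm
      exact h3
    have htail' : HasProd (fun m : ℕ => 1 - z ^ 2 / (c (m + N)) ^ 2) (Real.exp (T z)) := by
      have heq : (fun m : ℕ => 1 - z ^ 2 / (c (N + m)) ^ 2)
          = fun m : ℕ => 1 - z ^ 2 / (c (m + N)) ^ 2 := by
        funext m; rw [Nat.add_comm]
      rwa [heq] at htail
    have hfull := HasProd.prod_range_mul (f := fun n : ℕ => 1 - z ^ 2 / (c n) ^ 2)
      (k := N) htail'
    have hgoal : (fun n : ℕ => 1 - z ^ 2 / ((2 * (n : ℝ) + 1) * π / 2) ^ 2)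
        = fun n : ℕ => 1 - z ^ 2 / (c n) ^ 2 := by
      funext n
      simp only [hc_def]
    show HasProd (fun n : ℕ => 1 - z ^ 2 / ((2 * (n : ℝ) + 1) * π / 2) ^ 2)
      ((∏ i ∈ Finset.range N, (1 - z ^ 2 / (c i) ^ 2)) * Real.exp (T z))
    rw [hgoal]
    exact hfull

theorem cos_infinite_product (x : ℝ) :
    HasProd (fun n : ℕ => 1 - x ^ 2 / ((2 * (n : ℝ) + 1) * π / 2) ^ 2) (Real.cos x) := by
  obtain ⟨G, hGc, hG⟩ := hasProd_aux (|x| + 1) (by positivity)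
  have hx : |x| ≤ |x| + 1 := by linarith
  have hmain : G x = Real.cos x := by
    by_cases hs : Real.sin x = 0
    · have hkey : ∀ m : ℕ, G (x + 1 / ((m : ℝ) + 1)) = Real.cos (x + 1 / ((m : ℝ) + 1)) := by
        intro m
        have h1 : (0 : ℝ) < 1 / ((m : ℝ) + 1) := by positivity
        have h2 : (1 : ℝ) / ((m : ℝ) + 1) ≤ 1 := by
          rw [div_le_one (by positivity)]
          linarith [Nat.cast_nonneg (α := ℝ) m]
        have habs : |x + 1 / ((m : ℝ) + 1)| ≤ |x| + 1 := by
          calc |x + 1 / ((m : ℝ) + 1)| ≤ |x| + |1 / ((m : ℝ) + 1)| := abs_add_le _ _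
          _ ≤ |x| + 1 := by rw [abs_of_pos h1]; linarith
        have hsin : Real.sin (x + 1 / ((m : ℝ) + 1)) ≠ 0 := by
          rw [Real.sin_add, hs, zero_mul, zero_add]
          have hcos : Real.cos x ≠ 0 := by
            intro h
            have h4 := Real.sin_sq_add_cos_sq x
            rw [hs, h] at h4
            norm_num at h4
          have hsin1 : Real.sin (1 / ((m : ℝ) + 1)) ≠ 0 := by
            refine ne_of_gt (Real.sin_pos_of_pos_of_lt_pi h1 ?_)
            linarith [Real.pi_gt_three]
          exact mul_ne_zero hcos hsin1
        exact limit_eq_cos _ hsin _ (hG _ habs).tendsto_prod_nat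
      have hlim : Filter.Tendsto (fun m : ℕ => x + 1 / ((m : ℝ) + 1)) atTop (𝓝 x) := by
        have h0 : Filter.Tendsto (fun m : ℕ => 1 / ((m : ℝ) + 1)) atTop (𝓝 0) :=
          tendsto_one_div_add_atTop_nhds_zero_nat
        have h1 : Filter.Tendsto (fun m : ℕ => x + 1 / ((m : ℝ) + 1)) atTop (𝓝 (x + 0)) :=
          tendsto_const_nhds.add h0
        simpa using h1
      have hA : Filter.Tendsto (fun m : ℕ => G (x + 1 / ((m : ℝ) + 1))) atTop (𝓝 (G x)) :=
        (hGc.tendsto x).comp hlim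
      have hB : Filter.Tendsto (fun m : ℕ => Real.cos (x + 1 / ((m : ℝ) + 1))) atTop
          (𝓝 (Real.cos x)) := (Real.continuous_cos.tendsto x).comp hlim
      exact tendsto_nhds_unique (hA.congr hkey) hB
    · exact limit_eq_cos x hs (G x) (hG x hx).tendsto_prod_nat
  exact hmain ▸ hG x hx
end

section
/- ∫₀^{π/2} log(cos(θ/2)) dθ = -(π/2)·log 2 + G, where G = Σ_{n=0}^∞ (-1)^n/(2n+1)² is Catalan's constant. -/
open Real Filter Finset Topology

-- Abel summation bound
private lemma abel_bound {z : ℕ → ℝ} {b : ℝ} (hz : ∀ n, |∑ i ∈ range n, z i| ≤ b) (N : ℕ) :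
    |∑ i ∈ range N, (((i : ℝ) + 1)⁻¹) • z i| ≤ 2 * b := by
  have hb : 0 ≤ b := by simpa using hz 0
  set f : ℕ → ℝ := fun i => ((i : ℝ) + 1)⁻¹ with hf
  have hf1 : ∀ i, 0 < f i := fun i => by positivity
  have hfle : ∀ i, f i ≤ 1 := fun i => by
    rw [hf]; rw [inv_le_one_iff₀]; right; push_cast; linarith [Nat.cast_nonneg (α := ℝ) i]
  have hmono : ∀ i, f (i + 1) ≤ f i := fun i => by
    apply inv_anti₀ (by positivity); push_cast; linarith
  rw [Finset.sum_range_by_parts]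
  have h1 : |f (N - 1) • ∑ i ∈ range N, z i| ≤ b := by
    rw [smul_eq_mul, abs_mul, abs_of_pos (hf1 _)]
    calc f (N-1) * |∑ i ∈ range N, z i| ≤ 1 * b := by
          apply mul_le_mul (hfle _) (hz N) (abs_nonneg _) zero_le_one
      _ = b := one_mul b
  have h2 : |∑ i ∈ range (N - 1), (f (i + 1) - f i) • (∑ j ∈ range (i+1), z j)| ≤ b := by
    calc |∑ i ∈ range (N - 1), (f (i + 1) - f i) • (∑ j ∈ range (i+1), z j)|
        ≤ ∑ i ∈ range (N - 1), |(f (i + 1) - f i) • (∑ j ∈ range (i+1), z j)| :=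
          Finset.abs_sum_le_sum_abs _ _
      _ ≤ ∑ i ∈ range (N - 1), (f i - f (i + 1)) * b := by
          apply Finset.sum_le_sum
          intro i _
          rw [smul_eq_mul, abs_mul, abs_sub_comm, abs_of_nonneg (by linarith [hmono i])]
          exact mul_le_mul_of_nonneg_left (hz (i+1)) (by linarith [hmono i])
      _ = (f 0 - f (N - 1)) * b := by rw [← Finset.sum_mul, Finset.sum_range_sub']
      _ ≤ 1 * b := by
          apply mul_le_mul_of_nonneg_right _ hb
          have := hf1 (N - 1); have := hfle 0; linarith
      _ = b := one_mul b
  calc |_| ≤ |f (N - 1) • ∑ i ∈ range N, z i| +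
        |∑ i ∈ range (N - 1), (f (i + 1) - f i) • (∑ j ∈ range (i+1), z j)| := abs_sub _ _
    _ ≤ 2 * b := by linarith

private lemma geom_bound {θ : ℝ} (hθ0 : 0 ≤ θ) (hθ1 : θ ≤ π / 2) (n : ℕ) :
    |∑ i ∈ range n, (-1 : ℝ) ^ i * Real.cos (((i : ℝ) + 1) * θ)| ≤ Real.sqrt 2 := by
  set c : ℂ := -Complex.exp (θ * Complex.I) with hc
  have hcosθ : 0 ≤ Real.cos θ :=
    Real.cos_nonneg_of_mem_Icc ⟨by linarith [Real.pi_pos], hθ1⟩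
  have habs : ‖c‖ = 1 := by
    rw [hc, norm_neg]
    exact_mod_cast Complex.norm_exp_ofReal_mul_I θ
  have hc1 : c ≠ 1 := by
    intro h
    have : c.re = 1 := by rw [h]; simp
    rw [hc] at this
    simp only [Complex.neg_re] at this
    rw [Complex.exp_ofReal_mul_I_re] at this
    linarith
  have hdist : Real.sqrt 2 ≤ ‖c - 1‖ := by
    rw [Complex.norm_def]
    apply Real.sqrt_le_sqrt
    have : c - 1 = -(1 + Complex.exp (θ * Complex.I)) := by rw [hc]; ring
    rw [this, Complex.normSq_neg]
    rw [Complex.normSq_apply]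
    simp only [Complex.add_re, Complex.add_im, Complex.one_re, Complex.one_im,
      Complex.exp_ofReal_mul_I_re, Complex.exp_ofReal_mul_I_im]
    nlinarith [Real.sin_sq_add_cos_sq θ]
  have hgeom : ∀ m : ℕ, ‖∑ i ∈ range m, c ^ i‖ ≤ Real.sqrt 2 := by
    intro m
    rw [geom_sum_eq hc1]
    rw [norm_div]
    rw [div_le_iff₀ (lt_of_lt_of_le (by positivity) hdist)]
    calc ‖c ^ m - 1‖ ≤ ‖c ^ m‖ + 1 := by
          calc ‖c ^ m - 1‖ ≤ ‖c ^ m‖ + ‖(1 : ℂ)‖ :=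
                norm_sub_le _ _
            _ = ‖c ^ m‖ + 1 := by rw [norm_one]
      _ = 2 := by rw [norm_pow, habs, one_pow]; norm_num
      _ = Real.sqrt 2 * Real.sqrt 2 := by rw [← Real.sqrt_mul_self (by norm_num : (0:ℝ) ≤ 2)]; norm_num
      _ ≤ Real.sqrt 2 * ‖c - 1‖ := by
          exact mul_le_mul_of_nonneg_left hdist (Real.sqrt_nonneg 2)
  have hterm : ∀ i : ℕ, (-1 : ℝ) ^ i * Real.cos (((i : ℝ) + 1) * θ) = ((-c) * c ^ i).re := by
    intro i
    have : (-c) * c ^ i = ((-1 : ℝ) ^ i : ℝ) * Complex.exp ((((i : ℝ) + 1) * θ : ℝ) * Complex.I) := by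
      rw [hc]
      rw [neg_neg, neg_pow]
      rw [← Complex.exp_nat_mul]
      have hee : Complex.exp (↑θ * Complex.I) * Complex.exp (↑i * (↑θ * Complex.I))
          = Complex.exp (((i : ℂ) + 1) * ↑θ * Complex.I) := by
        rw [← Complex.exp_add]; congr 1; ring
      push_cast
      rw [mul_left_comm, hee]
    rw [this, Complex.re_ofReal_mul, Complex.exp_ofReal_mul_I_re]
  calc |∑ i ∈ range n, (-1 : ℝ) ^ i * Real.cos (((i : ℝ) + 1) * θ)|
      = |((-c) * ∑ i ∈ range n, c ^ i).re| := by
        rw [Finset.mul_sum, Complex.re_sum]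
        congr 1
        exact Finset.sum_congr rfl fun i _ => hterm i
    _ ≤ ‖(-c) * ∑ i ∈ range n, c ^ i‖ := Complex.abs_re_le_norm _
    _ = ‖∑ i ∈ range n, c ^ i‖ := by
        rw [norm_mul, norm_neg, habs, one_mul]
    _ ≤ Real.sqrt 2 := hgeom n

private lemma abs_one_add_exp {θ : ℝ} (hθ0 : 0 ≤ θ) (hθ1 : θ ≤ π / 2) :
    ‖1 + Complex.exp (θ * Complex.I)‖ = 2 * Real.cos (θ / 2) := by
  have hcos : 0 ≤ Real.cos (θ / 2) :=
    Real.cos_nonneg_of_mem_Icc ⟨by linarith [Real.pi_pos], by linarith [Real.pi_pos]⟩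
  rw [Complex.norm_def]
  have hns : Complex.normSq (1 + Complex.exp (θ * Complex.I)) = (2 * Real.cos (θ / 2)) ^ 2 := by
    rw [Complex.normSq_apply]
    simp only [Complex.add_re, Complex.add_im, Complex.one_re, Complex.one_im,
      Complex.exp_ofReal_mul_I_re, Complex.exp_ofReal_mul_I_im]
    have h2 : Real.cos (θ / 2) ^ 2 = 1 / 2 + Real.cos θ / 2 := by
      have := Real.cos_sq (θ / 2)
      rwa [show 2 * (θ / 2) = θ by ring] at this
    nlinarith [Real.sin_sq_add_cos_sq θ]
  rw [hns, Real.sqrt_sq (by positivity)]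

private lemma tendsto_partial {θ : ℝ} (hθ0 : 0 ≤ θ) (hθ1 : θ ≤ π / 2) :
    Tendsto (fun N => ∑ n ∈ range N, (-1 : ℝ) ^ (n + 1) * Real.cos (n * θ) / n) atTop
      (𝓝 (Real.log (2 * Real.cos (θ / 2)))) := by
  set f : ℕ → ℝ := fun n => (-1 : ℝ) ^ (n + 1) * Real.cos (n * θ) / n with hfdef
  set z : ℕ → ℝ := fun i => (-1 : ℝ) ^ i * Real.cos (((i : ℝ) + 1) * θ) with hzdef
  -- Cauchy via Dirichlet's test
  have hanti : Antitone (fun i : ℕ => ((i : ℝ) + 1)⁻¹) := by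
    intro a b hab
    apply inv_anti₀ (by positivity)
    push_cast
    exact by exact_mod_cast add_le_add_left (Nat.cast_le.mpr hab) 1
  have h0 : Tendsto (fun i : ℕ => ((i : ℝ) + 1)⁻¹) atTop (𝓝 0) := by
    simpa only [one_div] using tendsto_one_div_add_atTop_nhds_zero_nat (𝕜 := ℝ)
  have hcs : CauchySeq (fun n => ∑ i ∈ range n, ((i : ℝ) + 1)⁻¹ • z i) :=
    hanti.cauchySeq_series_mul_of_tendsto_zero_of_bounded h0
      (fun n => by simpa [Real.norm_eq_abs] using geom_bound hθ0 hθ1 n)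
  obtain ⟨l, hl⟩ := cauchySeq_tendsto_of_complete hcs
  have hshift : ∀ N, ∑ n ∈ range (N + 1), f n = ∑ i ∈ range N, ((i : ℝ) + 1)⁻¹ • z i := by
    intro N
    rw [Finset.sum_range_succ']
    have hf0 : f 0 = 0 := by simp [hfdef]
    rw [hf0, add_zero]
    apply Finset.sum_congr rfl
    intro i _
    simp only [hfdef, hzdef, smul_eq_mul]
    push_cast
    rw [pow_succ, pow_succ]
    ring
  have hS : Tendsto (fun N => ∑ n ∈ range N, f n) atTop (𝓝 l) := by
    rw [← Filter.tendsto_add_atTop_iff_nat 1]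
    exact hl.congr fun N => (hshift N).symm
  -- Abel's limit theorem
  have habel := Real.tendsto_tsum_powerSeries_nhdsWithin_lt hS
  -- identify the power series inside the disk
  have hid : ∀ x : ℝ, |x| < 1 →
      ∑' n, f n * x ^ n = Real.log ‖1 + x * Complex.exp (θ * Complex.I)‖ := by
    intro x hx
    have hnz : ‖(x : ℂ) * Complex.exp (θ * Complex.I)‖ < 1 := by
      rw [norm_mul, Complex.norm_real, Complex.norm_exp_ofReal_mul_I,
        mul_one, Real.norm_eq_abs]
      exact hx
    have hsum := Complex.hasSum_taylorSeries_log hnz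
    have hre := Complex.hasSum_re hsum
    have hterm : ∀ n : ℕ,
        f n * x ^ n = (((-1 : ℂ)) ^ (n + 1) * ((x : ℂ) * Complex.exp (θ * Complex.I)) ^ n / n).re := by
      intro n
      have hexp : Complex.exp (θ * Complex.I) ^ n = Complex.exp ((((n : ℝ) * θ : ℝ) : ℂ) * Complex.I) := by
        rw [← Complex.exp_nat_mul]
        congr 1
        push_cast
        ring
      have heq : ((-1 : ℂ)) ^ (n + 1) * ((x : ℂ) * Complex.exp (θ * Complex.I)) ^ n / n
          = ((((-1 : ℝ)) ^ (n + 1) * x ^ n / n : ℝ) : ℂ)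
              * Complex.exp ((((n : ℝ) * θ : ℝ) : ℂ) * Complex.I) := by
        rw [mul_pow, hexp]
        push_cast
        ring
      rw [heq, Complex.re_ofReal_mul, Complex.exp_ofReal_mul_I_re]
      simp only [hfdef]
      ring
    have hre' : HasSum (fun n => f n * x ^ n)
        ((Complex.log (1 + (x : ℂ) * Complex.exp (θ * Complex.I))).re) :=
      hre.congr_fun hterm
    rw [hre'.tsum_eq, Complex.log_re]
  -- continuity of the limit function
  have hcos2 : 0 < Real.cos (θ / 2) := by
    apply Real.cos_pos_of_mem_Ioo
    constructor <;> [linarith [Real.pi_pos]; linarith [Real.pi_pos]]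
  have habs1 : ‖1 + ((1 : ℝ) : ℂ) * Complex.exp (θ * Complex.I)‖ = 2 * Real.cos (θ / 2) := by
    rw [Complex.ofReal_one, one_mul]
    exact abs_one_add_exp hθ0 hθ1
  have hcont : Tendsto (fun x : ℝ => Real.log ‖1 + x * Complex.exp (θ * Complex.I)‖)
      (𝓝[<] (1 : ℝ)) (𝓝 (Real.log (2 * Real.cos (θ / 2)))) := by
    have hc1 : ContinuousAt (fun x : ℝ => ‖1 + x * Complex.exp (θ * Complex.I)‖) 1 :=
      (continuous_norm.comp (by continuity)).continuousAt
    have hc2 : ContinuousAt (fun x : ℝ =>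
        Real.log ‖1 + x * Complex.exp (θ * Complex.I)‖) 1 := by
      apply ContinuousAt.comp (g := Real.log) _ hc1
      apply Real.continuousAt_log
      rw [habs1]
      positivity
    have := hc2.tendsto.mono_left (nhdsWithin_le_nhds (s := Set.Iio (1:ℝ)))
    rwa [habs1] at this
  have hev : (fun x : ℝ => ∑' n, f n * x ^ n) =ᶠ[𝓝[<] (1 : ℝ)]
      (fun x : ℝ => Real.log ‖1 + x * Complex.exp (θ * Complex.I)‖) := by
    rw [eventuallyEq_nhdsWithin_iff, Metric.eventually_nhds_iff]
    refine ⟨1, zero_lt_one, fun y hy1 hy2 => ?_⟩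
    rw [Real.dist_eq, abs_sub_lt_iff] at hy1
    rw [Set.mem_Iio] at hy2
    exact hid y (abs_lt.mpr ⟨by linarith, hy2⟩)
  have : l = Real.log (2 * Real.cos (θ / 2)) :=
    tendsto_nhds_unique (habel.congr' hev) hcont
  rwa [this] at hS

private lemma partial_sum_shift {θ : ℝ} (N : ℕ) :
    ∑ n ∈ range (N + 1), (-1 : ℝ) ^ (n + 1) * Real.cos (n * θ) / n
      = ∑ i ∈ range N, ((i : ℝ) + 1)⁻¹ • ((-1 : ℝ) ^ i * Real.cos (((i : ℝ) + 1) * θ)) := by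
  rw [Finset.sum_range_succ']
  have hf0 : (-1 : ℝ) ^ (0 + 1) * Real.cos ((0 : ℕ) * θ) / (0 : ℕ) = 0 := by simp
  rw [hf0, add_zero]
  apply Finset.sum_congr rfl
  intro i _
  simp only [smul_eq_mul]
  push_cast
  rw [pow_succ, pow_succ]
  ring


private lemma partial_bound {θ : ℝ} (hθ0 : 0 ≤ θ) (hθ1 : θ ≤ π / 2) (N : ℕ) :
    |∑ n ∈ range N, (-1 : ℝ) ^ (n + 1) * Real.cos (n * θ) / n| ≤ 2 * Real.sqrt 2 := by
  rcases N with _ | M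
  · simpa using by positivity
  · rw [partial_sum_shift]
    exact abel_bound (geom_bound hθ0 hθ1) M


private lemma integral_term (n : ℕ) :
    ∫ θ in (0 : ℝ)..(π / 2), (-1 : ℝ) ^ (n + 1) * Real.cos (n * θ) / n
      = (-1 : ℝ) ^ (n + 1) * Real.sin ((n : ℝ) * (π / 2)) / (n : ℝ) ^ 2 := by
  rcases Nat.eq_zero_or_pos n with rfl | hn
  · simp
  · have hne : (n : ℝ) ≠ 0 := Nat.cast_ne_zero.mpr hn.ne'
    have hcongr : Set.EqOn (fun θ : ℝ => (-1 : ℝ) ^ (n + 1) * Real.cos (n * θ) / n)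
        (fun θ : ℝ => ((-1 : ℝ) ^ (n + 1) / n) * Real.cos ((n : ℝ) * θ))
        (Set.uIcc (0 : ℝ) (π / 2)) := fun θ _ => by ring
    rw [intervalIntegral.integral_congr hcongr, intervalIntegral.integral_const_mul,
      intervalIntegral.integral_comp_mul_left (fun x => Real.cos x) hne]
    rw [mul_zero, integral_cos, Real.sin_zero, sub_zero, smul_eq_mul]
    ring

private lemma b_summable :
    Summable (fun n : ℕ => (-1 : ℝ) ^ (n + 1) * Real.sin ((n : ℝ) * (π / 2)) / (n : ℝ) ^ 2) := by
  apply Summable.of_norm_bounded (g := fun n : ℕ => 1 / (n : ℝ) ^ 2)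
    (Real.summable_one_div_nat_pow.mpr one_lt_two)
  intro n
  rcases Nat.eq_zero_or_pos n with rfl | hn
  · simp
  · rw [Real.norm_eq_abs, abs_div, abs_pow, Nat.abs_cast]
    gcongr
    rw [abs_mul, abs_pow, abs_neg, abs_one, one_pow, one_mul]
    exact Real.abs_sin_le_one _


private lemma b_reindex :
    ∑' n : ℕ, (-1 : ℝ) ^ (n + 1) * Real.sin ((n : ℝ) * (π / 2)) / (n : ℝ) ^ 2
      = ∑' k : ℕ, (-1 : ℝ) ^ k / (2 * (k : ℝ) + 1) ^ 2 := by
  set b : ℕ → ℝ := fun n => (-1 : ℝ) ^ (n + 1) * Real.sin ((n : ℝ) * (π / 2)) / (n : ℝ) ^ 2 with hb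
  have hinj : Function.Injective (fun k : ℕ => 2 * k + 1) := fun a b h => by simp only at h; omega
  have hval : ∀ k : ℕ, b (2 * k + 1) = (-1 : ℝ) ^ k / (2 * (k : ℝ) + 1) ^ 2 := by
    intro k
    have harg : ((2 * k + 1 : ℕ) : ℝ) * (π / 2) = k * π + π / 2 := by push_cast; ring
    have hsin : Real.sin (((2 * k + 1 : ℕ) : ℝ) * (π / 2)) = (-1 : ℝ) ^ k := by
      rw [harg, Real.sin_add, Real.sin_nat_mul_pi, Real.cos_pi_div_two, Real.sin_pi_div_two,
        zero_mul, zero_add, mul_one]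
      have := Real.cos_nat_mul_pi_sub 0 k
      simpa using this
    have hpow : (-1 : ℝ) ^ (2 * k + 1 + 1) = 1 := by
      have : Even (2 * k + 1 + 1) := ⟨k + 1, by ring⟩
      exact this.neg_one_pow
    rw [hb]
    simp only
    rw [hsin, hpow, one_mul]
    push_cast
    ring
  have hsupp : Function.support b ⊆ Set.range (fun k : ℕ => 2 * k + 1) := by
    intro n hn
    rcases Nat.even_or_odd n with he | ho
    · exfalso
      obtain ⟨m, rfl⟩ := he
      apply hn
      have harg : ((m + m : ℕ) : ℝ) * (π / 2) = m * π := by push_cast; ring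
      rw [hb]
      simp only
      rw [harg, Real.sin_nat_mul_pi, mul_zero, zero_div]
    · obtain ⟨k, rfl⟩ := ho
      exact ⟨k, rfl⟩
  rw [← Function.Injective.tsum_eq hinj hsupp]
  exact tsum_congr hval

theorem integral_log_cos_half :
    ∫ θ in (0 : ℝ)..(π / 2), Real.log (Real.cos (θ / 2))
      = -(π / 2) * Real.log 2 + ∑' n : ℕ, (-1 : ℝ) ^ n / (2 * (n : ℝ) + 1) ^ 2 := by
  have hπ := Real.pi_pos
  have huIcc : Set.uIcc (0 : ℝ) (π / 2) = Set.Icc 0 (π / 2) :=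
    Set.uIcc_of_le (by linarith)
  have hcospos : ∀ θ ∈ Set.uIcc (0 : ℝ) (π / 2), 0 < Real.cos (θ / 2) := by
    intro θ hθ
    rw [huIcc] at hθ
    apply Real.cos_pos_of_mem_Ioo
    constructor
    · linarith [hθ.1]
    · linarith [hθ.2]
  -- continuity and integrability of the limit function
  have hcont : ContinuousOn (fun θ : ℝ => Real.log (2 * Real.cos (θ / 2)))
      (Set.uIcc (0 : ℝ) (π / 2)) := by
    apply ContinuousOn.log
    · exact (continuous_const.mul (Real.continuous_cos.comp (continuous_id.div_const 2))).continuousOn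
    · intro θ hθ
      have := hcospos θ hθ
      positivity
  have hInt : IntervalIntegrable (fun θ : ℝ => Real.log (2 * Real.cos (θ / 2)))
      MeasureTheory.volume 0 (π / 2) := hcont.intervalIntegrable
  -- dominated convergence
  have hDCT : Tendsto
      (fun N => ∫ θ in (0 : ℝ)..(π / 2), ∑ n ∈ range N, (-1 : ℝ) ^ (n + 1) * Real.cos (n * θ) / n)
      atTop (𝓝 (∫ θ in (0 : ℝ)..(π / 2), Real.log (2 * Real.cos (θ / 2)))) := by
    apply intervalIntegral.tendsto_integral_filter_of_dominated_convergence
      (bound := fun _ => 2 * Real.sqrt 2)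
    · apply Eventually.of_forall
      intro N
      apply Continuous.aestronglyMeasurable
      apply continuous_finset_sum
      intro n _
      exact (continuous_const.mul
        (Real.continuous_cos.comp (continuous_const.mul continuous_id))).div_const _
    · apply Eventually.of_forall
      intro N
      apply MeasureTheory.ae_of_all
      intro x hx
      rw [Set.uIoc_of_le (by linarith : (0:ℝ) ≤ π / 2)] at hx
      rw [Real.norm_eq_abs]
      exact partial_bound hx.1.le hx.2 N
    · exact intervalIntegrable_const
    · apply MeasureTheory.ae_of_all
      intro x hx
      rw [Set.uIoc_of_le (by linarith : (0:ℝ) ≤ π / 2)] at hx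
      exact tendsto_partial hx.1.le hx.2
  -- integral of partial sums
  have hIntegralEq : ∀ N : ℕ,
      (∫ θ in (0 : ℝ)..(π / 2), ∑ n ∈ range N, (-1 : ℝ) ^ (n + 1) * Real.cos (n * θ) / n)
        = ∑ n ∈ range N, (-1 : ℝ) ^ (n + 1) * Real.sin ((n : ℝ) * (π / 2)) / (n : ℝ) ^ 2 := by
    intro N
    rw [intervalIntegral.integral_finset_sum]
    · exact Finset.sum_congr rfl fun n _ => integral_term n
    · intro n _
      apply Continuous.intervalIntegrable
      exact (continuous_const.mul
        (Real.continuous_cos.comp (continuous_const.mul continuous_id))).div_const _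
  have hTendSum : Tendsto
      (fun N => ∑ n ∈ range N, (-1 : ℝ) ^ (n + 1) * Real.sin ((n : ℝ) * (π / 2)) / (n : ℝ) ^ 2)
      atTop (𝓝 (∫ θ in (0 : ℝ)..(π / 2), Real.log (2 * Real.cos (θ / 2)))) :=
    hDCT.congr fun N => hIntegralEq N
  have h1 : ∑' n : ℕ, (-1 : ℝ) ^ (n + 1) * Real.sin ((n : ℝ) * (π / 2)) / (n : ℝ) ^ 2
      = ∫ θ in (0 : ℝ)..(π / 2), Real.log (2 * Real.cos (θ / 2)) :=
    tendsto_nhds_unique b_summable.hasSum.tendsto_sum_nat hTendSum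
  -- split the logarithm
  have hsplit : Set.EqOn (fun θ : ℝ => Real.log (Real.cos (θ / 2)))
      (fun θ : ℝ => Real.log (2 * Real.cos (θ / 2)) - Real.log 2)
      (Set.uIcc (0 : ℝ) (π / 2)) := by
    intro θ hθ
    have hc := hcospos θ hθ
    simp only
    rw [Real.log_mul two_ne_zero hc.ne']
    ring
  rw [intervalIntegral.integral_congr hsplit,
    intervalIntegral.integral_sub hInt intervalIntegrable_const,
    intervalIntegral.integral_const, ← h1, b_reindex]
  rw [smul_eq_mul, sub_zero]
  ring
end

section
/- For every positive odd integer N and real x, N·tan(N x) = Σ_{a=0}^{N-1} tan(x + 2πa/N), whenever all terms are defined. -/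
open Real

section aux
open Complex Finset

theorem lemA (N : ℕ) (hN : 0 < N) (t : ℂ) :
    ∏ a ∈ Finset.range N, (t - Complex.exp (2 * Real.pi * I / N) ^ a) = t ^ N - 1 := by
  have hprim := Complex.isPrimitiveRoot_exp N hN.ne'
  have := X_pow_sub_C_eq_prod hprim hN (one_pow N)
  have h2 := congrArg (Polynomial.eval t) this
  simp only [Polynomial.eval_sub, Polynomial.eval_pow, Polynomial.eval_X, Polynomial.eval_one,
    Polynomial.eval_prod, Polynomial.eval_C, Polynomial.eval_mul, mul_one] at h2
  exact h2.symm

theorem lemB (N : ℕ) (hodd : Odd N) (f : ℕ → ℂ) :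
    ∏ a ∈ Finset.range N, f ((2 * a) % N) = ∏ a ∈ Finset.range N, f a := by
  obtain ⟨k, hk⟩ := hodd
  have hN : 0 < N := by omega
  apply Finset.prod_nbij' (fun a => (2 * a) % N) (fun b => ((k+1) * b) % N)
  · intro a _; exact Finset.mem_range.mpr (Nat.mod_lt _ hN)
  · intro a _; exact Finset.mem_range.mpr (Nat.mod_lt _ hN)
  · intro a ha
    have e1 : (k+1) * ((2*a)%N) ≡ (k+1)*(2*a) [MOD N] := (Nat.mod_modEq _ N).mul_left _
    have e2 : (k+1)*(2*a) = N*a + a := by subst hk; ring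
    have : ((k+1) * ((2*a)%N)) % N = (N*a + a) % N := by rw [← e2]; exact e1
    simp only [this, Nat.mul_add_mod]
    exact Nat.mod_eq_of_lt (Finset.mem_range.mp ha)
  · intro b hb
    have e1 : 2 * (((k+1)*b)%N) ≡ 2*((k+1)*b) [MOD N] := (Nat.mod_modEq _ N).mul_left _
    have e2 : 2*((k+1)*b) = N*b + b := by subst hk; ring
    have : (2 * (((k+1)*b)%N)) % N = (N*b + b) % N := by rw [← e2]; exact e1
    simp only [this, Nat.mul_add_mod]
    exact Nat.mod_eq_of_lt (Finset.mem_range.mp hb)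
  · intro a _; rfl

theorem lemC (N : ℕ) (hodd : Odd N) (z : ℂ) :
    ∏ a ∈ Finset.range N, (2 * Complex.cos (z + 2 * Real.pi * a / N)) =
      2 * Complex.cos (N * z) := by
  have hN : 0 < N := hodd.pos
  have hNC : (N : ℂ) ≠ 0 := Nat.cast_ne_zero.mpr hN.ne'
  set w : ℂ := Complex.exp (2 * Real.pi * I / N) with hw
  set v : ℂ := Complex.exp (-(2 * Real.pi * I / N)) with hv
  set q : ℂ := Complex.exp (2 * I * z) with hq
  have hq0 : q ≠ 0 := Complex.exp_ne_zero _
  have hwN : w ^ N = 1 := by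
    rw [hw, ← Complex.exp_nat_mul]
    rw [show (N : ℂ) * (2 * Real.pi * I / N) = 2 * Real.pi * I by field_simp]
    exact Complex.exp_two_pi_mul_I
  have hvw : v * w = 1 := by rw [hv, hw, ← Complex.exp_add]; simp
  -- step 1: rewrite each factor
  have step1 : ∀ a : ℕ, 2 * Complex.cos (z + 2 * Real.pi * a / N)
      = Complex.exp (-(I*z)) * v ^ a * (1 + q * w ^ (2*a)) := by
    intro a
    rw [Complex.cos, hq, hv, hw, ← Complex.exp_nat_mul, ← Complex.exp_nat_mul,
      ← Complex.exp_add, mul_add, mul_one, ← Complex.exp_add, ← Complex.exp_add]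
    have e1 : (z + 2 * (Real.pi:ℂ) * a / N) * I
        = -(I*z) + (a:ℂ) * -(2 * Real.pi * I / N) + (2 * I * z + ((2*a : ℕ):ℂ) * (2 * Real.pi * I / N)) := by
      push_cast; field_simp; ring
    have e2 : -(z + 2 * (Real.pi:ℂ) * a / N) * I = -(I*z) + (a:ℂ) * -(2 * Real.pi * I / N) := by
      push_cast; field_simp; ring
    rw [e1, e2]; ring
  -- step 2: take the product
  calc ∏ a ∈ Finset.range N, (2 * Complex.cos (z + 2 * Real.pi * a / N))
      = ∏ a ∈ Finset.range N, (Complex.exp (-(I*z)) * v ^ a * (1 + q * w ^ (2*a))) := by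
        exact Finset.prod_congr rfl fun a _ => step1 a
    _ = Complex.exp (-(I*z)) ^ N * v ^ (∑ a ∈ Finset.range N, a)
          * ∏ a ∈ Finset.range N, (1 + q * w ^ (2*a)) := by
        rw [Finset.prod_mul_distrib, Finset.prod_mul_distrib, Finset.prod_const,
          Finset.prod_pow_eq_pow_sum, Finset.card_range]
    _ = Complex.exp (-(I*z)) ^ N * ∏ a ∈ Finset.range N, (1 + q * w ^ (2*a)) := by
        obtain ⟨k, hk⟩ := hodd
        have hvN : v ^ N = 1 := by
          rw [hv, ← Complex.exp_nat_mul,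
            show (N:ℂ) * -(2 * Real.pi * I / N) = -(2 * Real.pi * I) by field_simp]
          simp [Complex.exp_neg, Complex.exp_two_pi_mul_I]
        have hs : ∑ a ∈ Finset.range N, a = N * k := by
          have h2 : (∑ a ∈ Finset.range N, a) * 2 = (N * k) * 2 := by
            rw [Finset.sum_range_id_mul_two, hk, Nat.add_sub_cancel]
            ring
          exact Nat.eq_of_mul_eq_mul_right (by norm_num) h2
        rw [hs, pow_mul, hvN, one_pow, mul_one]
    _ = Complex.exp (-(I*z)) ^ N * ∏ a ∈ Finset.range N, (1 + q * w ^ a) := by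
        congr 1
        have hper : ∀ a : ℕ, w ^ (2*a) = w ^ ((2*a) % N) := by
          intro a
          conv_lhs => rw [show 2*a = N * (2*a/N) + (2*a) % N from (Nat.div_add_mod (2*a) N).symm]
          rw [pow_add, pow_mul, hwN, one_pow, one_mul]
        calc ∏ a ∈ Finset.range N, (1 + q * w ^ (2*a))
            = ∏ a ∈ Finset.range N, (1 + q * w ^ ((2*a) % N)) :=
              Finset.prod_congr rfl fun a _ => by rw [hper]
          _ = ∏ a ∈ Finset.range N, (1 + q * w ^ a) := lemB N hodd (fun m => 1 + q * w ^ m)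
    _ = Complex.exp (-(I*z)) ^ N * (1 + q ^ N) := by
        congr 1
        have hf : ∀ a ∈ Finset.range N, 1 + q * w ^ a = (-q) * ((-q⁻¹) - w ^ a) := by
          intro a _; field_simp; ring
        rw [Finset.prod_congr rfl hf, Finset.prod_mul_distrib, Finset.prod_const,
          Finset.card_range, lemA N hN (-q⁻¹)]
        have h1 : (-q:ℂ)^N = -(q^N) := Odd.neg_pow hodd q
        have h2 : (-q⁻¹:ℂ)^N = -(q^N)⁻¹ := by rw [Odd.neg_pow hodd, inv_pow]
        rw [h1, h2]
        field_simp
        ring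
    _ = 2 * Complex.cos (N * z) := by
        rw [Complex.cos, ← Complex.exp_nat_mul, hq, ← Complex.exp_nat_mul, mul_add, mul_one,
          ← Complex.exp_add]
        rw [show (N:ℂ) * -(I*z) = -((N:ℂ)*z) * I by ring,
          show -((N:ℂ)*z) * I + (N:ℂ) * (2*I*z) = ((N:ℂ)*z) * I by ring]
        ring

open Real in
theorem lemR (N : ℕ) (hodd : Odd N) (x : ℝ) :
    ∏ a ∈ Finset.range N, (2 * Real.cos (x + 2 * π * a / N)) = 2 * Real.cos (N * x) := by
  have hC := lemC N hodd (x : ℂ)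
  rw [← Complex.ofReal_inj]
  push_cast [Complex.ofReal_cos]
  convert hC using 2

end aux

theorem tan_multiplication (N : ℕ) (hN : 0 < N) (hodd : Odd N) (x : ℝ)
    (h : Real.cos (N * x) ≠ 0)
    (h' : ∀ a ∈ Finset.range N, Real.cos (x + 2 * π * a / N) ≠ 0) :
    (N : ℝ) * Real.tan (N * x) = ∑ a ∈ Finset.range N, Real.tan (x + 2 * π * a / N) := by
  classical
  set P : ℝ := ∏ a ∈ Finset.range N, Real.cos (x + 2 * π * a / N) with hPdef
  have hP : P ≠ 0 := Finset.prod_ne_zero_iff.mpr h'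
  -- derivative of each factor
  have hfac : ∀ a : ℕ, HasDerivAt (fun y : ℝ => 2 * Real.cos (y + 2 * π * a / N))
      (2 * -Real.sin (x + 2 * π * a / N)) x := by
    intro a
    have h1 : HasDerivAt (fun y : ℝ => y + 2 * π * a / N) 1 x := (hasDerivAt_id x).add_const _
    have h2 := (Real.hasDerivAt_cos (x + 2 * π * a / N)).comp x h1
    simpa using h2.const_mul 2
  have hF : HasDerivAt (fun y : ℝ => ∏ a ∈ Finset.range N, (2 * Real.cos (y + 2 * π * a / N)))
      (∑ a ∈ Finset.range N, (∏ j ∈ (Finset.range N).erase a, (2 * Real.cos (x + 2 * π * j / N)))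
        • (2 * -Real.sin (x + 2 * π * a / N))) x :=
    HasDerivAt.fun_finsetProd (fun i _ => hfac i)
  have hG : HasDerivAt (fun y : ℝ => 2 * Real.cos (N * y)) (2 * (-Real.sin (N * x) * N)) x := by
    have h1 : HasDerivAt (fun y : ℝ => (N : ℝ) * y) (N : ℝ) x := by
      simpa using (hasDerivAt_id x).const_mul (N : ℝ)
    have h2 := (Real.hasDerivAt_cos ((N : ℝ) * x)).comp x h1
    simpa using h2.const_mul 2
  have hFG : (fun y : ℝ => ∏ a ∈ Finset.range N, (2 * Real.cos (y + 2 * π * a / N)))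
      = fun y : ℝ => 2 * Real.cos (N * y) := funext fun y => lemR N hodd y
  rw [hFG] at hF
  have hDeq := hF.unique hG
  -- rewrite the sum
  have hterm : ∀ a ∈ Finset.range N,
      (∏ j ∈ (Finset.range N).erase a, (2 * Real.cos (x + 2 * π * j / N)))
        • (2 * -Real.sin (x + 2 * π * a / N))
      = -(2 ^ N) * (Real.sin (x + 2 * π * a / N) *
          ∏ j ∈ (Finset.range N).erase a, Real.cos (x + 2 * π * j / N)) := by
    intro a ha
    rw [smul_eq_mul, Finset.prod_mul_distrib, Finset.prod_const,
      Finset.card_erase_of_mem ha, Finset.card_range]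
    have : (2:ℝ) ^ (N - 1) * 2 = 2 ^ N := by
      rw [← pow_succ]
      congr 1
      omega
    linear_combination (-(Real.sin (x + 2 * π * a / N) *
      ∏ j ∈ (Finset.range N).erase a, Real.cos (x + 2 * π * j / N))) * this
  rw [Finset.sum_congr rfl hterm, ← Finset.mul_sum] at hDeq
  set S : ℝ := ∑ a ∈ Finset.range N, (Real.sin (x + 2 * π * a / N) *
      ∏ j ∈ (Finset.range N).erase a, Real.cos (x + 2 * π * j / N)) with hSdef
  have h2N : (2:ℝ) ^ N = 2 * 2 ^ (N - 1) := by
    rw [← pow_succ']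
    congr 1
    omega
  have hsin : (N : ℝ) * Real.sin (N * x) = 2 ^ (N - 1) * S := by
    rw [h2N] at hDeq
    linear_combination (1/2 : ℝ) * hDeq
  have hcos : Real.cos (N * x) = 2 ^ (N - 1) * P := by
    have := lemR N hodd x
    rw [Finset.prod_mul_distrib, Finset.prod_const, Finset.card_range, h2N] at this
    linear_combination (-1/2 : ℝ) * this
  have hpow : (0:ℝ) < 2 ^ (N - 1) := by positivity
  calc (N : ℝ) * Real.tan (N * x) = ((N : ℝ) * Real.sin (N * x)) / Real.cos (N * x) := by
        rw [Real.tan_eq_sin_div_cos]; ring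
    _ = (2 ^ (N - 1) * S) / (2 ^ (N - 1) * P) := by rw [hsin, hcos]
    _ = S / P := mul_div_mul_left _ _ hpow.ne'
    _ = ∑ a ∈ Finset.range N, (Real.sin (x + 2 * π * a / N) *
          ∏ j ∈ (Finset.range N).erase a, Real.cos (x + 2 * π * j / N)) / P := by
        rw [hSdef, Finset.sum_div]
    _ = ∑ a ∈ Finset.range N, Real.tan (x + 2 * π * a / N) := by
        refine Finset.sum_congr rfl fun a ha => ?_
        rw [Real.tan_eq_sin_div_cos, div_eq_div_iff hP (h' a ha), hPdef,
          ← Finset.mul_prod_erase _ _ ha]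
        ring
end
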